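/- Let (Ω, 𝓕, P) be a probability space with Ω a standard Borel space, let X_i and X_j be real-valued random variables, let X_r be a random variable with values in a standard Borel space, and let 𝓖 be a sub-σ-algebra with 𝓖 ≤ σ(X_r) ≤ 𝓕. If the pair (X_i, X_j) is conditionally independent of X_r given 𝓖, then X_i and X_j are conditionally independent given σ(X_r) if and only if X_i and X_j are conditionally independent given 𝓖. -/

import Mathlib

open MeasureTheory ProbabilityTheory

/-- If the conditional expectation of the indicator of `A ∩ Xr ⁻¹' B` given `𝓖` factorizes
for every measurable `B`, and `𝓖 ≤ σ(Xr)`, then conditioning on `σ(Xr)` is the same as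
conditioning on `𝓖` for the indicator of `A`. -/
lemma aux_condexp_comap_eq {Ω γ : Type*} (𝓖 : MeasurableSpace Ω) [mΩ : MeasurableSpace Ω]
    (μ : Measure Ω) [IsProbabilityMeasure μ]
    [MeasurableSpace γ] {Xr : Ω → γ} (hXr : Measurable Xr)
    (h𝓖 : 𝓖 ≤ MeasurableSpace.comap Xr inferInstance)
    {A : Set Ω} (hA : MeasurableSet A)
    (h : ∀ B : Set γ, MeasurableSet B →
      (μ⟦A ∩ Xr ⁻¹' B | 𝓖⟧) =ᵐ[μ] fun ω => (μ⟦A | 𝓖⟧) ω * (μ⟦Xr ⁻¹' B | 𝓖⟧) ω) :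
    (μ⟦A | MeasurableSpace.comap Xr inferInstance⟧) =ᵐ[μ] μ⟦A | 𝓖⟧ := by
  have hm2 : MeasurableSpace.comap Xr inferInstance ≤ mΩ := hXr.comap_le
  have h𝓖F : 𝓖 ≤ mΩ := h𝓖.trans hm2
  have hfA : Integrable (A.indicator (fun _ => (1 : ℝ))) μ :=
    (integrable_const 1).indicator hA
  refine (ae_eq_condExp_of_forall_setIntegral_eq hm2 hfA
    (fun s _ _ => integrable_condExp.integrableOn) ?_
    (stronglyMeasurable_condExp.mono h𝓖).aestronglyMeasurable).symm
  rintro s ⟨B, hB, rfl⟩ -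
  have hs : MeasurableSet (Xr ⁻¹' B) := hXr hB
  set I : Ω → ℝ := (Xr ⁻¹' B).indicator (fun _ => (1 : ℝ)) with hI
  have hIs : Integrable I μ := (integrable_const 1).indicator hs
  have hIbdd : ∀ x, ‖I x‖ ≤ 1 := by
    intro x
    rw [hI]
    by_cases hx : x ∈ Xr ⁻¹' B <;> simp [Set.indicator, hx]
  have hg : StronglyMeasurable[𝓖] (μ⟦A | 𝓖⟧) := stronglyMeasurable_condExp
  have hmul_int : Integrable ((μ⟦A | 𝓖⟧) * I) μ := by
    have := Integrable.bdd_mul (integrable_condExp (m := 𝓖) (f := A.indicator (fun _ => (1:ℝ))))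
      (c := 1) (hIs.aestronglyMeasurable) (Filter.Eventually.of_forall hIbdd)
    simpa [Pi.mul_def, mul_comm] using this
  calc ∫ x in Xr ⁻¹' B, (μ⟦A | 𝓖⟧) x ∂μ
      = ∫ x, (Xr ⁻¹' B).indicator (μ⟦A | 𝓖⟧) x ∂μ := (integral_indicator hs).symm
    _ = ∫ x, ((μ⟦A | 𝓖⟧) * I) x ∂μ := by
        refine integral_congr_ae (Filter.Eventually.of_forall fun x => ?_)
        by_cases hx : x ∈ Xr ⁻¹' B <;>
          simp [hI, Set.indicator, hx]
    _ = ∫ x, (μ[(μ⟦A | 𝓖⟧) * I | 𝓖]) x ∂μ := (integral_condExp h𝓖F).symm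
    _ = ∫ x, ((μ⟦A | 𝓖⟧) x * (μ⟦Xr ⁻¹' B | 𝓖⟧) x) ∂μ := by
        refine integral_congr_ae ((condExp_mul_of_stronglyMeasurable_left hg hmul_int hIs).trans ?_)
        exact Filter.Eventually.of_forall fun x => rfl
    _ = ∫ x, (μ⟦A ∩ Xr ⁻¹' B | 𝓖⟧) x ∂μ := (integral_congr_ae (h B hB)).symm
    _ = ∫ x, (A ∩ Xr ⁻¹' B).indicator (fun _ => (1 : ℝ)) x ∂μ := integral_condExp h𝓖F
    _ = ∫ x in Xr ⁻¹' B, A.indicator (fun _ => (1 : ℝ)) x ∂μ := by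
        rw [← integral_indicator hs]
        refine integral_congr_ae (Filter.Eventually.of_forall fun x => ?_)
        rw [Set.indicator_indicator, Set.inter_comm]

/-- Theorem 1 of the paper: if `(Xᵢ, Xⱼ) ⫫ X_r | 𝓖` for a sub-σ-algebra `𝓖 ≤ σ(X_r)`,
then `Xᵢ ⫫ Xⱼ | σ(X_r)` if and only if `Xᵢ ⫫ Xⱼ | 𝓖`. -/
theorem sufficient_graphical_model_equivalence
    {Ω : Type*} [mΩ : MeasurableSpace Ω] [StandardBorelSpace Ω]
    (μ : Measure Ω) [IsProbabilityMeasure μ]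
    {γ : Type*} [MeasurableSpace γ] [StandardBorelSpace γ]
    (Xi Xj : Ω → ℝ) (Xr : Ω → γ)
    (hXi : Measurable Xi) (hXj : Measurable Xj) (hXr : Measurable Xr)
    (𝓖 : MeasurableSpace Ω)
    (h𝓖 : 𝓖 ≤ MeasurableSpace.comap Xr inferInstance)
    (hSDR : CondIndepFun 𝓖 (h𝓖.trans hXr.comap_le)
      (fun ω => (Xi ω, Xj ω)) Xr μ) :
    CondIndepFun (MeasurableSpace.comap Xr inferInstance) hXr.comap_le Xi Xj μ ↔
      CondIndepFun 𝓖 (h𝓖.trans hXr.comap_le) Xi Xj μ := by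
  set P : Ω → ℝ × ℝ := fun ω => (Xi ω, Xj ω) with hP
  have hPm : Measurable[mΩ] P := Measurable.prodMk (m := mΩ) hXi hXj
  rw [condIndepFun_iff_condExp_inter_preimage_eq_mul (mΩ := mΩ) (m' := 𝓖)
    (hm' := h𝓖.trans hXr.comap_le) (μ := μ) hPm hXr] at hSDR
  have key : ∀ S : Set (ℝ × ℝ), MeasurableSet S →
      (μ⟦P ⁻¹' S | MeasurableSpace.comap Xr inferInstance⟧) =ᵐ[μ] μ⟦P ⁻¹' S | 𝓖⟧ := by
    intro S hS
    exact aux_condexp_comap_eq (mΩ := mΩ) 𝓖 μ hXr h𝓖 (hPm hS) (fun B hB => hSDR S B hS hB)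
  have keyi : ∀ s : Set ℝ, MeasurableSet s →
      (μ⟦Xi ⁻¹' s | MeasurableSpace.comap Xr inferInstance⟧) =ᵐ[μ] μ⟦Xi ⁻¹' s | 𝓖⟧ := by
    intro s hs
    have h1 : Xi ⁻¹' s = P ⁻¹' (s ×ˢ Set.univ) := by
      ext x; simp [hP]
    rw [h1]
    exact key _ (hs.prod MeasurableSet.univ)
  have keyj : ∀ t : Set ℝ, MeasurableSet t →
      (μ⟦Xj ⁻¹' t | MeasurableSpace.comap Xr inferInstance⟧) =ᵐ[μ] μ⟦Xj ⁻¹' t | 𝓖⟧ := by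
    intro t ht
    have h1 : Xj ⁻¹' t = P ⁻¹' (Set.univ ×ˢ t) := by
      ext x; simp [hP]
    rw [h1]
    exact key _ (MeasurableSet.univ.prod ht)
  have keyij : ∀ s t : Set ℝ, MeasurableSet s → MeasurableSet t →
      (μ⟦Xi ⁻¹' s ∩ Xj ⁻¹' t | MeasurableSpace.comap Xr inferInstance⟧)
        =ᵐ[μ] μ⟦Xi ⁻¹' s ∩ Xj ⁻¹' t | 𝓖⟧ := by
    intro s t hs ht
    have h1 : Xi ⁻¹' s ∩ Xj ⁻¹' t = P ⁻¹' (s ×ˢ t) := by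
      ext x; simp [hP]
    rw [h1]
    exact key _ (hs.prod ht)
  rw [condIndepFun_iff_condExp_inter_preimage_eq_mul (mΩ := mΩ)
      (m' := MeasurableSpace.comap Xr inferInstance) (hm' := hXr.comap_le) (μ := μ) hXi hXj,
    condIndepFun_iff_condExp_inter_preimage_eq_mul (mΩ := mΩ) (m' := 𝓖)
      (hm' := h𝓖.trans hXr.comap_le) (μ := μ) hXi hXj]
  constructor
  · intro h s t hs ht
    calc (μ⟦Xi ⁻¹' s ∩ Xj ⁻¹' t | 𝓖⟧)
        =ᵐ[μ] μ⟦Xi ⁻¹' s ∩ Xj ⁻¹' t | MeasurableSpace.comap Xr inferInstance⟧ :=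
          (keyij s t hs ht).symm
      _ =ᵐ[μ] fun ω => (μ⟦Xi ⁻¹' s | MeasurableSpace.comap Xr inferInstance⟧) ω *
            (μ⟦Xj ⁻¹' t | MeasurableSpace.comap Xr inferInstance⟧) ω := h s t hs ht
      _ =ᵐ[μ] fun ω => (μ⟦Xi ⁻¹' s | 𝓖⟧) ω * (μ⟦Xj ⁻¹' t | 𝓖⟧) ω :=
          (keyi s hs).mul (keyj t ht)
  · intro h s t hs ht
    calc (μ⟦Xi ⁻¹' s ∩ Xj ⁻¹' t | MeasurableSpace.comap Xr inferInstance⟧)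
        =ᵐ[μ] μ⟦Xi ⁻¹' s ∩ Xj ⁻¹' t | 𝓖⟧ := keyij s t hs ht
      _ =ᵐ[μ] fun ω => (μ⟦Xi ⁻¹' s | 𝓖⟧) ω * (μ⟦Xj ⁻¹' t | 𝓖⟧) ω := h s t hs ht
      _ =ᵐ[μ] fun ω => (μ⟦Xi ⁻¹' s | MeasurableSpace.comap Xr inferInstance⟧) ω *
            (μ⟦Xj ⁻¹' t | MeasurableSpace.comap Xr inferInstance⟧) ω :=
          ((keyi s hs).symm).mul ((keyj t ht).symm)
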